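/- Let f be a Lorentzian polynomial of degree d in x_1,...,x_n, fix an index i and m ∈ ℕ, and let f̄ = Σ_{α: α_i ≤ m} λ_α x^α be its truncation. Then for every multi-index α of degree d−2, the quadratic form ∂^α f̄ has at most one positive eigenvalue. -/

import Mathlib

open MvPolynomial
open Matrix

variable {n : ℕ}

/-- A real matrix has at most one positive eigenvalue (counted with multiplicity). -/
def AtMostOnePos {m : ℕ} (A : Matrix (Fin m) (Fin m) ℝ) : Prop :=
  ∀ hA : A.IsHermitian, (Finset.univ.filter fun i => 0 < hA.eigenvalues i).card ≤ 1

/-- The iterated partial derivative `∂^α`. -/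
noncomputable def pderivPow (α : Fin n →₀ ℕ) (f : MvPolynomial (Fin n) ℝ) :
    MvPolynomial (Fin n) ℝ :=
  (List.finRange n).foldr (fun i g => (pderiv i)^[α i] g) f

/-- The (constant) Hessian matrix of a polynomial, representing it as a quadratic form
when it is quadratic. -/
noncomputable def hessian (f : MvPolynomial (Fin n) ℝ) : Matrix (Fin n) (Fin n) ℝ :=
  fun i j => MvPolynomial.coeff 0 (pderiv i (pderiv j f))

/-- M-convexity of a set of multi-indices. -/
def MConvexSupp (C : Set (Fin n →₀ ℕ)) : Prop :=
  ∀ α ∈ C, ∀ β ∈ C, ∀ j : Fin n, β j < α j →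
    ∃ k : Fin n, α k < β k ∧ α - Finsupp.single j 1 + Finsupp.single k 1 ∈ C

/-- `f` is Lorentzian of degree `d`: homogeneous of degree `d` with non-negative
coefficients, and if `d ≥ 2`, its support is M-convex and every `(d−2)`-fold partial
derivative is a quadratic form with at most one positive eigenvalue. -/
def Lorentzian (d : ℕ) (f : MvPolynomial (Fin n) ℝ) : Prop :=
  f.IsHomogeneous d ∧ (∀ α, 0 ≤ f.coeff α) ∧
  (2 ≤ d → MConvexSupp {α | f.coeff α ≠ 0} ∧
    ∀ α : Fin n →₀ ℕ, (α.sum fun _ k => k) = d - 2 →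
      AtMostOnePos (hessian (pderivPow α f)))

/-- `f` is Lorentzian (of some degree). -/
def IsLorentzian (f : MvPolynomial (Fin n) ℝ) : Prop := ∃ d, Lorentzian d f

/-- The constant-coefficient differential operator `s(∂_{x_1},…,∂_{x_n})`. -/
noncomputable def diffOp (s f : MvPolynomial (Fin n) ℝ) : MvPolynomial (Fin n) ℝ :=
  ∑ α ∈ s.support, s.coeff α • pderivPow α f

/-- The truncation keeping only monomials whose exponent of `xᵢ` is at most `m`. -/
noncomputable def truncVarLE (i : Fin n) (m : ℕ) (f : MvPolynomial (Fin n) ℝ) :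
    MvPolynomial (Fin n) ℝ :=
  ∑ β ∈ f.support.filter (fun β => β i ≤ m), monomial β (f.coeff β)


lemma iterate_pderiv_monomial (i : Fin n) (k : ℕ) (β : Fin n →₀ ℕ) (c : ℝ) :
    (pderiv i)^[k] (monomial β c) =
      monomial (β - Finsupp.single i k) (c * ((β i).descFactorial k : ℝ)) := by
  induction k with
  | zero => simp
  | succ k ih =>
    rw [Function.iterate_succ_apply', ih, pderiv_monomial]
    congr 1
    · rw [tsub_tsub, ← Finsupp.single_add]
    · rw [Finsupp.tsub_apply, Finsupp.single_eq_same, Nat.descFactorial_succ]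
      push_cast
      ring

lemma foldr_pderiv_monomial (α : Fin n →₀ ℕ) (β : Fin n →₀ ℕ) (c : ℝ) :
    ∀ L : List (Fin n), L.Nodup →
      L.foldr (fun i g => (pderiv i)^[α i] g) (monomial β c) =
      monomial (β - ∑ t ∈ L.toFinset, Finsupp.single t (α t))
        (c * ((∏ t ∈ L.toFinset, (β t).descFactorial (α t) : ℕ) : ℝ))
  | [], _ => by simp
  | (i :: L), hnd => by
    obtain ⟨hiL, hL⟩ := List.nodup_cons.mp hnd
    rw [List.foldr_cons, foldr_pderiv_monomial α β c L hL, iterate_pderiv_monomial]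
    have hS : (β - ∑ t ∈ L.toFinset, Finsupp.single t (α t)) i = β i := by
      rw [Finsupp.tsub_apply]
      have h0 : (∑ t ∈ L.toFinset, Finsupp.single t (α t)) i = 0 := by
        rw [Finsupp.finset_sum_apply]
        refine Finset.sum_eq_zero fun t ht => ?_
        rw [Finsupp.single_apply, if_neg]
        intro h
        exact hiL (h ▸ List.mem_toFinset.mp ht)
      rw [h0, Nat.sub_zero]
    rw [List.toFinset_cons, Finset.sum_insert (by simpa using hiL),
      Finset.prod_insert (by simpa using hiL)]
    congr 1
    · rw [tsub_tsub, add_comm]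
    · rw [hS]
      push_cast
      ring

lemma pderivPow_monomial (α β : Fin n →₀ ℕ) (c : ℝ) :
    pderivPow α (monomial β c) =
      monomial (β - α) (c * ((∏ t, (β t).descFactorial (α t) : ℕ) : ℝ)) := by
  rw [pderivPow, foldr_pderiv_monomial α β c _ (List.nodup_finRange n),
    List.toFinset_finRange]
  have hsum : (∑ t : Fin n, Finsupp.single t (α t)) = α := by
    ext a
    rw [Finsupp.finset_sum_apply,
      Finset.sum_eq_single a (fun t _ ht => Finsupp.single_eq_of_ne' ht) (by simp)]
    exact Finsupp.single_eq_same
  rw [hsum]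

lemma pderivPow_zero (α : Fin n →₀ ℕ) : pderivPow α (0 : MvPolynomial (Fin n) ℝ) = 0 := by
  rw [show (0 : MvPolynomial (Fin n) ℝ) = monomial 0 0 by simp, pderivPow_monomial]
  simp

lemma pderivPow_add (α : Fin n →₀ ℕ) (p q : MvPolynomial (Fin n) ℝ) :
    pderivPow α (p + q) = pderivPow α p + pderivPow α q := by
  have hit : ∀ (i : Fin n) (k : ℕ) (p q : MvPolynomial (Fin n) ℝ),
      (pderiv i)^[k] (p + q) = (pderiv i)^[k] p + (pderiv i)^[k] q := by
    intro i k
    induction k with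
    | zero => intro p q; simp
    | succ k ih =>
      intro p q
      rw [Function.iterate_succ_apply, map_add, ih, Function.iterate_succ_apply,
        Function.iterate_succ_apply]
  suffices h : ∀ L : List (Fin n),
      L.foldr (fun i g => (pderiv i)^[α i] g) (p + q) =
      L.foldr (fun i g => (pderiv i)^[α i] g) p +
        L.foldr (fun i g => (pderiv i)^[α i] g) q by
    exact h _
  intro L
  induction L with
  | nil => rfl
  | cons i L ih => rw [List.foldr_cons, ih, hit]; rfl

lemma pderivPow_sum {X : Type*} (s : Finset X) (F : X → MvPolynomial (Fin n) ℝ)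
    (α : Fin n →₀ ℕ) :
    pderivPow α (∑ b ∈ s, F b) = ∑ b ∈ s, pderivPow α (F b) := by
  classical
  induction s using Finset.induction_on with
  | empty => simpa using pderivPow_zero α
  | insert _ _ hmem ih =>
    rw [Finset.sum_insert hmem, pderivPow_add, ih, Finset.sum_insert hmem]

noncomputable def hessConst (α : Fin n →₀ ℕ) (j k : Fin n) : ℝ :=
  ((∏ t, ((α + Finsupp.single j 1 + Finsupp.single k 1 : Fin n →₀ ℕ) t).descFactorial (α t) : ℕ) : ℝ) *
    ((if j = k then 1 else 0) + 1)

lemma hessConst_nonneg (α : Fin n →₀ ℕ) (j k : Fin n) : 0 ≤ hessConst α j k := by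
  unfold hessConst
  apply mul_nonneg (Nat.cast_nonneg _)
  split_ifs <;> norm_num

lemma hessConst_symm (α : Fin n →₀ ℕ) (j k : Fin n) : hessConst α j k = hessConst α k j := by
  unfold hessConst
  rw [add_right_comm α (Finsupp.single j 1) (Finsupp.single k 1)]
  by_cases h : j = k
  · subst h; rfl
  · rw [if_neg h, if_neg (Ne.symm h)]

lemma coeff_hess_monomial (α : Fin n →₀ ℕ) (j k : Fin n) (β : Fin n →₀ ℕ) (c : ℝ) :
    MvPolynomial.coeff 0 (pderiv j (pderiv k (pderivPow α (monomial β c)))) =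
      if β = α + Finsupp.single j 1 + Finsupp.single k 1 then c * hessConst α j k else 0 := by
  rw [pderivPow_monomial, pderiv_monomial, pderiv_monomial, coeff_monomial]
  by_cases hβ : β = α + Finsupp.single j 1 + Finsupp.single k 1
  · subst hβ
    have h1 : α + Finsupp.single j 1 + Finsupp.single k 1 - α
        = Finsupp.single j 1 + Finsupp.single k 1 := by
      rw [add_assoc]; exact add_tsub_cancel_left _ _
    rw [h1, add_tsub_cancel_right, tsub_self, if_pos rfl, if_pos rfl]
    unfold hessConst
    have h2 : ((Finsupp.single j 1 + Finsupp.single k 1 : Fin n →₀ ℕ) k)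
        = (if j = k then 1 else 0) + 1 := by
      simp [Finsupp.add_apply, Finsupp.single_apply]
    have h3 : ((Finsupp.single j 1 : Fin n →₀ ℕ) j) = 1 := Finsupp.single_eq_same
    rw [h2, h3]
    push_cast
    split_ifs <;> ring
  · rw [if_neg hβ]
    split_ifs with h0
    swap
    · rfl
    have hzero : ((∏ t, (β t).descFactorial (α t) : ℕ) : ℝ) = 0 ∨
        ((β - α : Fin n →₀ ℕ) k : ℕ) = 0 ∨ ((β - α - Finsupp.single k 1 : Fin n →₀ ℕ) j : ℕ) = 0 := by
      by_contra hcon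
      push_neg at hcon
      obtain ⟨hK, hx, hy⟩ := hcon
      have hαβ : ∀ t, α t ≤ β t := by
        intro t
        have hK' : (β t).descFactorial (α t) ≠ 0 :=
          Finset.prod_ne_zero_iff.mp (Nat.cast_ne_zero.mp hK) t (Finset.mem_univ t)
        exact le_of_not_gt fun hlt => hK' (Nat.descFactorial_eq_zero_iff_lt.mpr hlt)
      have h0t : ∀ t, β t - α t - (if k = t then 1 else 0) - (if j = t then 1 else 0) = 0 := by
        intro t
        have := DFunLike.congr_fun h0 t
        simpa [Finsupp.tsub_apply, Finsupp.single_apply] using this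
      have hx' : β k - α k ≠ 0 := by simpa [Finsupp.tsub_apply] using hx
      have hy' : β j - α j - (if k = j then 1 else 0) ≠ 0 := by
        simpa [Finsupp.tsub_apply, Finsupp.single_apply] using hy
      apply hβ
      ext t
      have hadd : ((α + Finsupp.single j 1 + Finsupp.single k 1 : Fin n →₀ ℕ)) t
          = α t + (if j = t then 1 else 0) + (if k = t then 1 else 0) := by
        simp [Finsupp.single_apply]
      rw [hadd]
      have A := h0t t
      have B := hαβ t
      by_cases hjt : j = t <;> by_cases hkt : k = t
      · subst hjt
        have hkj : k = j := hkt
        rw [if_pos rfl, if_pos hkt] at A ⊢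
        rw [if_pos hkj] at hy'
        subst hkj
        omega
      · subst hjt
        rw [if_pos rfl, if_neg hkt] at A ⊢
        rw [if_neg hkt] at hy'
        omega
      · subst hkt
        rw [if_neg hjt, if_pos rfl] at A ⊢
        omega
      · rw [if_neg hjt, if_neg hkt] at A ⊢
        omega
    rcases hzero with h | h | h
    · rw [h]; ring
    · rw [h]; push_cast; ring
    · rw [h]; push_cast; ring

lemma hessian_pderivPow (α : Fin n →₀ ℕ) (p : MvPolynomial (Fin n) ℝ) (j k : Fin n) :
    hessian (pderivPow α p) j k =
      hessConst α j k * coeff (α + Finsupp.single j 1 + Finsupp.single k 1) p := by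
  conv_lhs => rw [← p.support_sum_monomial_coeff]
  unfold hessian
  rw [pderivPow_sum, map_sum, map_sum, MvPolynomial.coeff_sum]
  rw [Finset.sum_congr rfl fun β _ => coeff_hess_monomial α j k β (coeff β p)]
  rw [Finset.sum_eq_single (α + Finsupp.single j 1 + Finsupp.single k 1)]
  · rw [if_pos rfl, mul_comm]
  · intro b _ hb; rw [if_neg hb]
  · intro hT; rw [if_pos rfl, notMem_support_iff.mp hT, zero_mul]

lemma hessian_pderivPow_isHermitian (α : Fin n →₀ ℕ) (p : MvPolynomial (Fin n) ℝ) :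
    (hessian (pderivPow α p)).IsHermitian := by
  rw [Matrix.IsHermitian]
  ext j k
  rw [Matrix.conjTranspose_apply, star_trivial, hessian_pderivPow, hessian_pderivPow,
    hessConst_symm α k j, add_right_comm]

lemma coeff_truncVarLE (i : Fin n) (m : ℕ) (f : MvPolynomial (Fin n) ℝ) (β : Fin n →₀ ℕ) :
    coeff β (truncVarLE i m f) = if β i ≤ m then coeff β f else 0 := by
  unfold truncVarLE
  rw [MvPolynomial.coeff_sum]
  simp_rw [coeff_monomial]
  rw [Finset.sum_ite_eq' (f.support.filter fun β => β i ≤ m) β (fun γ => coeff γ f)]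
  by_cases hm : β i ≤ m <;> by_cases hs : β ∈ f.support <;>
    simp [Finset.mem_filter, hm, hs, MvPolynomial.notMem_support_iff.mp]


lemma quadform_eigen {N : ℕ} {A : Matrix (Fin N) (Fin N) ℝ} (hA : A.IsHermitian) (x : Fin N → ℝ) :
    x ⬝ᵥ A *ᵥ x = ∑ t, hA.eigenvalues t *
      ((star (hA.eigenvectorUnitary : Matrix (Fin N) (Fin N) ℝ) *ᵥ x) t)^2 := by
  set U := (hA.eigenvectorUnitary : Matrix (Fin N) (Fin N) ℝ) with hU
  have hsU : star U = Uᵀ := by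
    rw [Matrix.star_eq_conjTranspose, Matrix.conjTranspose_eq_transpose_of_trivial]
  have h1 : A *ᵥ x = U *ᵥ (Matrix.diagonal hA.eigenvalues *ᵥ (star U *ᵥ x)) := by
    conv_lhs => rw [hA.spectral_theorem]
    rw [Unitary.conjStarAlgAut_apply, ← Matrix.mulVec_mulVec, ← Matrix.mulVec_mulVec]
    rfl
  rw [h1, Matrix.dotProduct_mulVec]
  have h2 : x ᵥ* U = star U *ᵥ x := by rw [hsU, Matrix.mulVec_transpose]
  rw [h2]
  simp only [Matrix.mulVec_diagonal, dotProduct]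
  refine Finset.sum_congr rfl fun t _ => by ring

lemma starU_mulVec {N : ℕ} {A : Matrix (Fin N) (Fin N) ℝ} (hA : A.IsHermitian) (c : Fin N → ℝ) :
    star (hA.eigenvectorUnitary : Matrix (Fin N) (Fin N) ℝ) *ᵥ
      ((hA.eigenvectorUnitary : Matrix (Fin N) (Fin N) ℝ) *ᵥ c) = c := by
  rw [Matrix.mulVec_mulVec]
  rw [show star (hA.eigenvectorUnitary : Matrix (Fin N) (Fin N) ℝ) *
      (hA.eigenvectorUnitary : Matrix (Fin N) (Fin N) ℝ) = 1 from Unitary.coe_star_mul_self _]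
  rw [Matrix.one_mulVec]

lemma atMostOnePos_of_le {N : ℕ} (A B P : Matrix (Fin N) (Fin N) ℝ)
    (hAH : A.IsHermitian)
    (hA1 : (Finset.univ.filter fun t => 0 < hAH.eigenvalues t).card ≤ 1)
    (hQ : ∀ x : Fin N → ℝ, x ⬝ᵥ B *ᵥ x ≤ (P *ᵥ x) ⬝ᵥ A *ᵥ (P *ᵥ x)) :
    AtMostOnePos B := by
  intro hB
  by_contra hcard
  push_neg at hcard
  obtain ⟨j, hj, k, hk, hjk⟩ := Finset.one_lt_card.mp hcard
  simp only [Finset.mem_filter, Finset.mem_univ, true_and] at hj hk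
  have hN : 0 < N := j.pos
  -- a linear functional whose kernel is A-nonpositive
  have hexφ : ∃ φ : (Fin N → ℝ) →ₗ[ℝ] ℝ, ∀ x, φ x = 0 → x ⬝ᵥ A *ᵥ x ≤ 0 := by
    rcases Finset.eq_empty_or_nonempty
        (Finset.univ.filter fun t => 0 < hAH.eigenvalues t) with hTe | ⟨i₀, hi₀⟩
    · refine ⟨0, fun x _ => ?_⟩
      rw [quadform_eigen hAH x]
      refine Finset.sum_nonpos fun t _ => mul_nonpos_iff.mpr (Or.inr ⟨?_, sq_nonneg _⟩)
      by_contra hpos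
      push_neg at hpos
      have : t ∈ Finset.univ.filter fun t => 0 < hAH.eigenvalues t := by
        simp [hpos]
      rw [hTe] at this; exact absurd this (Finset.notMem_empty t)
    · refine ⟨(LinearMap.proj i₀).comp
        (Matrix.mulVecLin (star (hAH.eigenvectorUnitary : Matrix (Fin N) (Fin N) ℝ))),
        fun x hx => ?_⟩
      rw [quadform_eigen hAH x]
      refine Finset.sum_nonpos fun t _ => ?_
      by_cases ht : t = i₀
      · subst ht
        have h0 : (star (hAH.eigenvectorUnitary : Matrix (Fin N) (Fin N) ℝ) *ᵥ x) t = 0 := hx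
        rw [h0]
        simp
      · refine mul_nonpos_iff.mpr (Or.inr ⟨?_, sq_nonneg _⟩)
        by_contra hpos
        push_neg at hpos
        have hmem : t ∈ Finset.univ.filter fun t => 0 < hAH.eigenvalues t := by simp [hpos]
        have := Finset.card_le_one.mp hA1 t hmem i₀ hi₀
        exact ht this
  obtain ⟨φ, hφ⟩ := hexφ
  set ψ := φ.comp (Matrix.mulVecLin P) with hψ
  have hfr : Module.finrank ℝ (Fin N → ℝ) = N := by simp
  have hW'rank : N - 1 ≤ Module.finrank ℝ (LinearMap.ker ψ) := by
    have h := LinearMap.finrank_range_add_finrank_ker ψ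
    have h2 : Module.finrank ℝ (LinearMap.range ψ) ≤ 1 := by
      have := Submodule.finrank_le (LinearMap.range ψ)
      simpa using this
    rw [hfr] at h
    omega
  -- the positive 2-dim subspace for B
  set UB := (hB.eigenvectorUnitary : Matrix (Fin N) (Fin N) ℝ) with hUB
  set u := UB *ᵥ Pi.single j 1 with hu
  set v := UB *ᵥ Pi.single k 1 with hv
  have hcomb : ∀ a b : ℝ, star UB *ᵥ (a • u + b • v)
      = a • (Pi.single j 1 : Fin N → ℝ) + b • (Pi.single k 1 : Fin N → ℝ) := by
    intro a b
    rw [hu, hv, ← Matrix.mulVec_smul, ← Matrix.mulVec_smul, ← Matrix.mulVec_add,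
      starU_mulVec hB]
  have hQB : ∀ a b : ℝ, (a • u + b • v) ⬝ᵥ B *ᵥ (a • u + b • v) =
      hB.eigenvalues j * a ^ 2 + hB.eigenvalues k * b ^ 2 := by
    intro a b
    rw [quadform_eigen hB, ← hUB]
    rw [Finset.sum_eq_add_of_mem j k (Finset.mem_univ j) (Finset.mem_univ k) hjk ?_]
    · rw [hcomb]
      simp [Pi.single_apply, hjk, hjk.symm]
    · intro c _ ⟨hcj, hck⟩
      rw [hcomb]
      simp [Pi.single_apply, hcj, hck]
  have hQBpos : ∀ a b : ℝ, (a ≠ 0 ∨ b ≠ 0) →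
      0 < (a • u + b • v) ⬝ᵥ B *ᵥ (a • u + b • v) := by
    intro a b hab
    rw [hQB]
    rcases hab with ha | hb
    · have h1 : 0 < hB.eigenvalues j * a ^ 2 := by positivity
      have h2 : 0 ≤ hB.eigenvalues k * b ^ 2 := by positivity
      linarith
    · have h1 : 0 < hB.eigenvalues k * b ^ 2 := by positivity
      have h2 : 0 ≤ hB.eigenvalues j * a ^ 2 := by positivity
      linarith
  -- u, v linearly independent
  have hli : LinearIndependent ℝ ![u, v] := by
    rw [LinearIndependent.pair_iff]
    intro a b hab
    have h := hcomb a b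
    rw [hab, Matrix.mulVec_zero] at h
    have hja := congrFun h.symm j
    have hkb := congrFun h.symm k
    simp [Pi.single_apply, hjk, hjk.symm] at hja hkb
    exact ⟨hja, hkb⟩
  set Sub2 : Submodule ℝ (Fin N → ℝ) := Submodule.span ℝ {u, v} with hSub2
  have hrange : Set.range ![u, v] = {u, v} := by
    ext w; simp [Fin.exists_fin_two, or_comm]
  have hr2 : Module.finrank ℝ Sub2 = 2 := by
    have h := finrank_span_eq_card hli
    rw [hrange] at h
    simpa using h
  have hint : 1 ≤ Module.finrank ℝ ↥(Sub2 ⊓ LinearMap.ker ψ) := by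
    have h5 := Submodule.finrank_sup_add_finrank_inf_eq Sub2 (LinearMap.ker ψ)
    have h6 : Module.finrank ℝ ↥(Sub2 ⊔ LinearMap.ker ψ) ≤ N := by
      have := Submodule.finrank_le (Sub2 ⊔ LinearMap.ker ψ)
      simpa using this
    omega
  have hne : (Sub2 ⊓ LinearMap.ker ψ) ≠ ⊥ := Submodule.one_le_finrank_iff.mp hint
  obtain ⟨x, hxmem, hx0⟩ := Submodule.exists_mem_ne_zero_of_ne_bot hne
  obtain ⟨hxS, hxK⟩ := Submodule.mem_inf.mp hxmem
  obtain ⟨a, b, hab⟩ := Submodule.mem_span_pair.mp hxS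
  have habne : a ≠ 0 ∨ b ≠ 0 := by
    by_contra hc
    push_neg at hc
    apply hx0
    rw [← hab, hc.1, hc.2]
    simp
  have hpos := hQBpos a b habne
  rw [hab] at hpos
  have hker : φ (P *ᵥ x) = 0 := by
    have h := LinearMap.mem_ker.mp hxK
    simpa [hψ, Matrix.mulVecLin_apply] using h
  have hle := (hQ x).trans (hφ _ hker)
  linarith



/-- If `f` is Lorentzian of degree `d ≥ 2`, then every `(d−2)`-fold partial derivative
of the truncation `f̄ = Σ_{α_i ≤ m} λ_α x^α` is a quadratic form with at most one
positive eigenvalue. -/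
theorem stmt_13 (f : MvPolynomial (Fin n) ℝ) (d : ℕ) (hd : 2 ≤ d)
    (hf : Lorentzian d f) (i : Fin n) (m : ℕ) :
    ∀ α : Fin n →₀ ℕ, (α.sum fun _ k => k) = d - 2 →
      AtMostOnePos (hessian (pderivPow α (truncVarLE i m f))) := by
  intro α hα
  obtain ⟨hhom, hcoeffs, hrest⟩ := hf
  obtain ⟨hM, hAll⟩ := hrest hd
  have hA1 : AtMostOnePos (hessian (pderivPow α f)) := hAll α hα
  set A := hessian (pderivPow α f) with hAdef
  set B := hessian (pderivPow α (truncVarLE i m f)) with hBdef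
  have hAjk : ∀ j k, A j k = hessConst α j k
      * coeff (α + Finsupp.single j 1 + Finsupp.single k 1) f :=
    fun j k => hessian_pderivPow α f j k
  have hBjk : ∀ j k, B j k = hessConst α j k *
      (if α i + (if j = i then 1 else 0) + (if k = i then 1 else 0) ≤ m
        then coeff (α + Finsupp.single j 1 + Finsupp.single k 1) f else 0) := by
    intro j k
    rw [hBdef, hessian_pderivPow, coeff_truncVarLE]
    have hTi : (α + Finsupp.single j 1 + Finsupp.single k 1 : Fin n →₀ ℕ) i
        = α i + (if j = i then 1 else 0) + (if k = i then 1 else 0) := by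
      simp [Finsupp.single_apply]
    rw [hTi]
  have hAH : A.IsHermitian := hessian_pderivPow_isHermitian α f
  have hA1' := hA1 hAH
  by_cases hc1 : α i + 2 ≤ m
  · have hBA : B = A := by
      ext j k
      rw [hBjk, hAjk, if_pos (by split_ifs <;> omega)]
    rw [hBA]
    exact hA1
  by_cases hc2 : α i + 1 = m
  · have hB' : ∀ j k, B j k = if j = i ∧ k = i then 0 else A j k := by
      intro j k
      by_cases hji : j = i <;> by_cases hki : k = i
      · rw [hBjk, if_neg (by rw [if_pos hji, if_pos hki]; omega), mul_zero,
          if_pos (show j = i ∧ k = i from ⟨hji, hki⟩)]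
      · rw [hBjk, hAjk, if_neg (show ¬(j = i ∧ k = i) from fun h => hki h.2),
          if_pos (by rw [if_pos hji, if_neg hki]; omega)]
      · rw [hBjk, hAjk, if_neg (show ¬(j = i ∧ k = i) from fun h => hji h.1),
          if_pos (by rw [if_neg hji, if_pos hki]; omega)]
      · rw [hBjk, hAjk, if_neg (show ¬(j = i ∧ k = i) from fun h => hji h.1),
          if_pos (by rw [if_neg hji, if_neg hki]; omega)]
    have hAii : 0 ≤ A i i := by
      rw [hAjk]
      exact mul_nonneg (hessConst_nonneg α i i) (hcoeffs _)
    apply atMostOnePos_of_le A B 1 hAH hA1'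
    intro x
    rw [Matrix.one_mulVec]
    have hinner : ∀ j, (∑ k, B j k * x k) = (∑ k, A j k * x k)
        - (if j = i then A i i * x i else 0) := by
      intro j
      by_cases hji : j = i
      · rw [if_pos hji, hji]
        have hterm : ∀ k, B i k * x k = A i k * x k - (if k = i then A i i * x i else 0) := by
          intro k
          rw [hB']
          by_cases hki : k = i
          · rw [if_pos (show i = i ∧ k = i from ⟨rfl, hki⟩), if_pos hki, hki]
            ring
          · rw [if_neg (show ¬(i = i ∧ k = i) from fun h => hki h.2), if_neg hki]
            ring
        rw [Finset.sum_congr rfl fun k _ => hterm k, Finset.sum_sub_distrib,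
          Finset.sum_ite_eq' Finset.univ i (fun _ => A i i * x i),
          if_pos (Finset.mem_univ i)]
      · rw [if_neg hji, sub_zero]
        refine Finset.sum_congr rfl fun k _ => ?_
        rw [hB', if_neg (show ¬(j = i ∧ k = i) from fun h => hji h.1)]
    have hxB : x ⬝ᵥ B *ᵥ x = x ⬝ᵥ A *ᵥ x - A i i * (x i * x i) := by
      simp only [dotProduct, Matrix.mulVec]
      simp_rw [hinner, mul_sub]
      rw [Finset.sum_sub_distrib]
      simp_rw [mul_ite, mul_zero]
      rw [Finset.sum_ite_eq' Finset.univ i (fun j => x j * (A i i * x i)),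
        if_pos (Finset.mem_univ i)]
      ring
    rw [hxB]
    have hnn : 0 ≤ A i i * (x i * x i) := mul_nonneg hAii (mul_self_nonneg (x i))
    linarith
  by_cases hc3 : α i = m
  · have hB' : ∀ j k, B j k = if j = i ∨ k = i then 0 else A j k := by
      intro j k
      by_cases hji : j = i <;> by_cases hki : k = i
      · rw [hBjk, if_neg (by rw [if_pos hji, if_pos hki]; omega), mul_zero,
          if_pos (Or.inl hji)]
      · rw [hBjk, if_neg (by rw [if_pos hji, if_neg hki]; omega), mul_zero,
          if_pos (Or.inl hji)]
      · rw [hBjk, if_neg (by rw [if_neg hji, if_pos hki]; omega), mul_zero,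
          if_pos (Or.inr hki)]
      · rw [hBjk, hAjk, if_pos (by rw [if_neg hji, if_neg hki]; omega),
          if_neg (show ¬(j = i ∨ k = i) from fun h => h.elim hji hki)]
    set P : Matrix (Fin n) (Fin n) ℝ := Matrix.diagonal (fun t => if t = i then 0 else 1)
      with hP
    apply atMostOnePos_of_le A B P hAH hA1'
    intro x
    have hPx : ∀ t, (P *ᵥ x) t = if t = i then 0 else x t := by
      intro t
      rw [hP, Matrix.mulVec_diagonal]
      split_ifs <;> ring
    refine le_of_eq ?_
    have hform : ∀ (M : Matrix (Fin n) (Fin n) ℝ) (z : Fin n → ℝ),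
        z ⬝ᵥ M *ᵥ z = ∑ j, ∑ k, z j * (M j k * z k) := by
      intro M z
      simp only [dotProduct, Matrix.mulVec, Finset.mul_sum]
    rw [hform, hform]
    refine Finset.sum_congr rfl fun j _ => Finset.sum_congr rfl fun k _ => ?_
    rw [hB', hPx, hPx]
    by_cases hji : j = i <;> by_cases hki : k = i <;> simp [hji, hki]
  · have hB0 : B = 0 := by
      ext j k
      rw [hBjk, if_neg (by split_ifs <;> omega), mul_zero, Matrix.zero_apply]
    apply atMostOnePos_of_le A B 0 hAH hA1'
    intro x
    rw [hB0]
    simp
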